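/- Every finite lattice is isomorphic to the maxbiclique lattice of the comparability relation between its meet-irreducible and join-irreducible elements, where the isomorphism sends an element c to the pair consisting of all meet-irreducibles above c and all join-irreducibles below c. -/
import Mathlib

/-- A pair of sets of meet-irreducibles and join-irreducibles forming an induced
biclique of the comparability relation `(i, j) ∈ R ↔ j ≤ i`. -/
def IsIrrBiclique {L : Type*} [Lattice L] (p : Set L × Set L) : Prop :=
  (∀ i ∈ p.1, InfIrred i) ∧ (∀ j ∈ p.2, SupIrred j) ∧ ∀ i ∈ p.1, ∀ j ∈ p.2, j ≤ i

/-- The maxbicliques of the comparability relation between meet-irreducibles and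
join-irreducibles of a lattice. -/
def MaxBiclique (L : Type*) [Lattice L] : Type _ :=
  {p : Set L × Set L // IsIrrBiclique p ∧
    ∀ q : Set L × Set L, IsIrrBiclique q → p.1 ⊆ q.1 → p.2 ⊆ q.2 → p = q}

/-- Maxbicliques are ordered by containment of the lower (join-irreducible) parts. -/
instance {L : Type*} [Lattice L] : LE (MaxBiclique L) :=
  ⟨fun p q => p.1.2 ⊆ q.1.2⟩

section aux
variable {L : Type*} [Fintype L] [Lattice L] [BoundedOrder L]

lemma auxA (c d : L) (h : ∀ j, SupIrred j → j ≤ c → j ≤ d) : c ≤ d := by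
  obtain ⟨s, hs, hirr⟩ := exists_supIrred_decomposition c
  rw [← hs]
  exact Finset.sup_le fun b hb => h b (hirr hb) (hs ▸ Finset.le_sup (f := id) hb)

lemma auxB (c d : L) (h : ∀ i, InfIrred i → c ≤ i → d ≤ i) : d ≤ c := by
  obtain ⟨s, hs, hirr⟩ := exists_infIrred_decomposition c
  rw [← hs]
  exact Finset.le_inf fun b hb => h b (hirr hb) (hs ▸ Finset.inf_le (f := id) hb)

def Fpair (c : L) : Set L × Set L := ({i | InfIrred i ∧ c ≤ i}, {j | SupIrred j ∧ j ≤ c})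

set_option linter.unusedSectionVars false in
lemma Fpair_biclique (c : L) : IsIrrBiclique (Fpair c) :=
  ⟨fun _ hi => hi.1, fun _ hj => hj.1, fun _ hi _ hj => hj.2.trans hi.2⟩

lemma Fpair_max (c : L) : ∀ q : Set L × Set L, IsIrrBiclique q →
    (Fpair c).1 ⊆ q.1 → (Fpair c).2 ⊆ q.2 → Fpair c = q := by
  rintro q ⟨hq1, hq2, hq3⟩ h1 h2
  have hq1' : q.1 ⊆ (Fpair c).1 := fun i hi =>
    ⟨hq1 i hi, auxA c i fun j hj hjc => hq3 i hi j (h2 ⟨hj, hjc⟩)⟩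
  have hq2' : q.2 ⊆ (Fpair c).2 := fun j hj =>
    ⟨hq2 j hj, auxB c j fun i hi hci => hq3 i (h1 ⟨hi, hci⟩) j hj⟩
  exact Prod.ext (le_antisymm h1 hq1') (le_antisymm h2 hq2')

noncomputable def Fmb (c : L) : MaxBiclique L := ⟨Fpair c, Fpair_biclique c, Fpair_max c⟩

lemma Fmb_le {c d : L} : Fmb c ≤ Fmb d ↔ c ≤ d := by
  constructor
  · intro h
    exact auxA c d fun j hj hjc => (h (show j ∈ (Fpair c).2 from ⟨hj, hjc⟩)).2
  · intro h j hj
    exact ⟨hj.1, hj.2.trans h⟩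

lemma Fmb_surj : Function.Surjective (Fmb (L := L)) := by
  classical
  rintro ⟨p, hp, hmax⟩
  set c := (p.2.toFinset).sup id with hc
  refine ⟨c, ?_⟩
  have h1 : p.1 ⊆ (Fpair c).1 := fun i hi =>
    ⟨hp.1 i hi, Finset.sup_le fun j hj => hp.2.2 i hi j (Set.mem_toFinset.1 hj)⟩
  have h2 : p.2 ⊆ (Fpair c).2 := fun j hj =>
    ⟨hp.2.1 j hj, Finset.le_sup (f := id) (Set.mem_toFinset.2 hj)⟩
  have := hmax (Fpair c) (Fpair_biclique c) h1 h2
  exact Subtype.ext this.symm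

end aux

/-- Every finite lattice is isomorphic to the maxbiclique lattice of the comparability
relation between its meet-irreducible and join-irreducible elements, via the map sending
`c` to (meet-irreducibles above `c`, join-irreducibles below `c`). -/
theorem stmt4 {L : Type*} [Fintype L] [Lattice L] [BoundedOrder L] :
    ∃ e : L ≃o MaxBiclique L, ∀ c : L,
      (e c).1 = ({i | InfIrred i ∧ c ≤ i}, {j | SupIrred j ∧ j ≤ c}) := by
  have hinj : Function.Injective (Fmb (L := L)) := fun c d h => by
    have h' : (Fmb c).1.2 = (Fmb d).1.2 := congrArg (fun p : MaxBiclique L => p.1.2) h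
    exact le_antisymm (Fmb_le.1 h'.subset) (Fmb_le.1 h'.superset)
  refine ⟨⟨Equiv.ofBijective _ ⟨hinj, Fmb_surj⟩, ?_⟩, fun c => rfl⟩
  intro a b
  exact Fmb_le
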